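/- Let N, M ≥ 1, let Ξ, Λ ∈ M_N(ℂ) be constant matrices with no common eigenvalue, and let η: ℝ² → ℂ^{N×M}, θ: ℝ² → ℂ^{M×N}, Ω: ℝ² → M_N(ℂ), A: ℝ² → M_M(ℂ) be differentiable functions of (τ, σ) such that at every point: Ξ·Ω − Ω·Λ = η·θ; ∂_σ η = Ξ·(∂_τ η) + η·A; and ∂_σ θ = (∂_τ θ)·Λ − A·θ. Then Ω satisfies the differential recurrence relations ∂_σ Ω = (∂_τ η)·θ + (∂_τ Ω)·Λ and ∂_σ Ω = Ξ·(∂_τ Ω) − η·(∂_τ θ). -/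

import Mathlib

noncomputable section

/-- Entrywise partial derivative in the first coordinate `τ` of `ℝ²`. -/
def pdτ {a b : Type*} (f : ℝ × ℝ → Matrix a b ℂ) (p : ℝ × ℝ) : Matrix a b ℂ :=
  Matrix.of fun i j => deriv (fun s => f (s, p.2) i j) p.1

/-- Entrywise partial derivative in the second coordinate `σ` of `ℝ²`. -/
def pdσ {a b : Type*} (f : ℝ × ℝ → Matrix a b ℂ) (p : ℝ × ℝ) : Matrix a b ℂ :=
  Matrix.of fun i j => deriv (fun s => f (p.1, s) i j) p.2

section Helpers

variable {a b c : Type*}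

private lemma lineτ_diff {f : ℝ × ℝ → ℂ} (hf : Differentiable ℝ f) (t : ℝ) :
    Differentiable ℝ fun s : ℝ => f (s, t) :=
  hf.comp (differentiable_id.prodMk (differentiable_const t))

private lemma lineσ_diff {f : ℝ × ℝ → ℂ} (hf : Differentiable ℝ f) (t : ℝ) :
    Differentiable ℝ fun s : ℝ => f (t, s) :=
  hf.comp ((differentiable_const t).prodMk differentiable_id)

private lemma entry_diff_mul [Fintype b] (f : ℝ × ℝ → Matrix a b ℂ) (g : ℝ × ℝ → Matrix b c ℂ)
    (hf : ∀ i j, Differentiable ℝ fun z => f z i j)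
    (hg : ∀ i j, Differentiable ℝ fun z => g z i j) :
    ∀ i j, Differentiable ℝ fun z => (f z * g z) i j := by
  intro i j
  simp only [Matrix.mul_apply]
  exact Differentiable.fun_sum fun k _ => (hf i k).mul (hg k j)

private lemma pdτ_sub (f g : ℝ × ℝ → Matrix a b ℂ)
    (hf : ∀ i j, Differentiable ℝ fun z => f z i j)
    (hg : ∀ i j, Differentiable ℝ fun z => g z i j) (p : ℝ × ℝ) :
    pdτ (fun z => f z - g z) p = pdτ f p - pdτ g p := by
  ext i j
  simp only [pdτ, Matrix.of_apply, Matrix.sub_apply]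
  exact deriv_sub (lineτ_diff (hf i j) p.2 p.1) (lineτ_diff (hg i j) p.2 p.1)

private lemma pdσ_sub (f g : ℝ × ℝ → Matrix a b ℂ)
    (hf : ∀ i j, Differentiable ℝ fun z => f z i j)
    (hg : ∀ i j, Differentiable ℝ fun z => g z i j) (p : ℝ × ℝ) :
    pdσ (fun z => f z - g z) p = pdσ f p - pdσ g p := by
  ext i j
  simp only [pdσ, Matrix.of_apply, Matrix.sub_apply]
  exact deriv_sub (lineσ_diff (hf i j) p.1 p.2) (lineσ_diff (hg i j) p.1 p.2)

private lemma pdτ_mul [Fintype b] (f : ℝ × ℝ → Matrix a b ℂ) (g : ℝ × ℝ → Matrix b c ℂ)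
    (hf : ∀ i j, Differentiable ℝ fun z => f z i j)
    (hg : ∀ i j, Differentiable ℝ fun z => g z i j) (p : ℝ × ℝ) :
    pdτ (fun z => f z * g z) p = pdτ f p * g p + f p * pdτ g p := by
  ext i j
  have h : HasDerivAt (fun s => (f (s, p.2) * g (s, p.2)) i j)
      (∑ k, (deriv (fun s => f (s, p.2) i k) p.1 * g p k j
        + f p i k * deriv (fun s => g (s, p.2) k j) p.1)) p.1 := by
    simp only [Matrix.mul_apply]
    refine HasDerivAt.fun_sum fun k _ => ?_
    have h1 := ((lineτ_diff (hf i k) p.2) p.1).hasDerivAt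
    have h2 := ((lineτ_diff (hg k j) p.2) p.1).hasDerivAt
    simpa using h1.fun_mul h2
  have hd := h.deriv
  simp only [Matrix.mul_apply] at hd
  simp only [pdτ, Matrix.of_apply, Matrix.mul_apply, Matrix.add_apply]
  rw [hd, Finset.sum_add_distrib]

private lemma pdσ_mul [Fintype b] (f : ℝ × ℝ → Matrix a b ℂ) (g : ℝ × ℝ → Matrix b c ℂ)
    (hf : ∀ i j, Differentiable ℝ fun z => f z i j)
    (hg : ∀ i j, Differentiable ℝ fun z => g z i j) (p : ℝ × ℝ) :
    pdσ (fun z => f z * g z) p = pdσ f p * g p + f p * pdσ g p := by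
  ext i j
  have h : HasDerivAt (fun s => (f (p.1, s) * g (p.1, s)) i j)
      (∑ k, (deriv (fun s => f (p.1, s) i k) p.2 * g p k j
        + f p i k * deriv (fun s => g (p.1, s) k j) p.2)) p.2 := by
    simp only [Matrix.mul_apply]
    refine HasDerivAt.fun_sum fun k _ => ?_
    have h1 := ((lineσ_diff (hf i k) p.1) p.2).hasDerivAt
    have h2 := ((lineσ_diff (hg k j) p.1) p.2).hasDerivAt
    simpa using h1.fun_mul h2
  have hd := h.deriv
  simp only [Matrix.mul_apply] at hd
  simp only [pdσ, Matrix.of_apply, Matrix.mul_apply, Matrix.add_apply]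
  rw [hd, Finset.sum_add_distrib]

private lemma pdτ_const (C : Matrix a b ℂ) (p : ℝ × ℝ) : pdτ (fun _ => C) p = 0 := by
  ext i j; simp [pdτ]

private lemma pdσ_const (C : Matrix a b ℂ) (p : ℝ × ℝ) : pdσ (fun _ => C) p = 0 := by
  ext i j; simp [pdσ]

private lemma entry_diff_const (C : Matrix a b ℂ) :
    ∀ i j, Differentiable ℝ fun _ : ℝ × ℝ => C i j :=
  fun _ _ => differentiable_const _

open Polynomial in
private lemma eval_charpoly_eq_det {N : ℕ} (Λ : Matrix (Fin N) (Fin N) ℂ) (μ : ℂ) :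
    (Matrix.charpoly Λ).eval μ = (Matrix.scalar (Fin N) μ - Λ).det := by
  rw [Matrix.charpoly, ← Polynomial.coe_evalRingHom, RingHom.map_det]
  congr 1
  ext i j
  by_cases h : i = j <;>
    simp [h, Matrix.charmatrix_apply, Matrix.scalar_apply, Matrix.diagonal_apply, Matrix.sub_apply]

/-- Uniqueness for the homogeneous Sylvester equation when spectra are disjoint. -/
private lemma sylv_unique {N : ℕ} (hN : 1 ≤ N) (Ξ Λ : Matrix (Fin N) (Fin N) ℂ)
    (hΞΛ : spectrum ℂ Ξ ∩ spectrum ℂ Λ = ∅)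
    (W : Matrix (Fin N) (Fin N) ℂ) (h : Ξ * W = W * Λ) : W = 0 := by
  haveI : NeZero N := ⟨by omega⟩
  have hpow : ∀ n : ℕ, Ξ ^ n * W = W * Λ ^ n := by
    intro n
    induction n with
    | zero => simp
    | succ n ih =>
      rw [pow_succ', mul_assoc, ih, ← mul_assoc, h, mul_assoc, ← pow_succ']
  have key : ∀ p : Polynomial ℂ, Polynomial.aeval Ξ p * W = W * Polynomial.aeval Λ p := by
    intro p
    induction p using Polynomial.induction_on' with
    | add p q hp hq => simp [map_add, add_mul, mul_add, hp, hq]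
    | monomial n c =>
      simp only [Polynomial.aeval_monomial]
      rw [mul_assoc, hpow n, ← mul_assoc, Algebra.commutes c W, mul_assoc]
  have hq := key (Matrix.charpoly Λ)
  rw [Matrix.aeval_self_charpoly, mul_zero] at hq
  have hunit : IsUnit (Polynomial.aeval Ξ (Matrix.charpoly Λ)) := by
    by_contra hcon
    have h0 : (0 : ℂ) ∈ spectrum ℂ (Polynomial.aeval Ξ (Matrix.charpoly Λ)) :=
      (spectrum.zero_mem_iff ℂ).mpr hcon
    have hdeg : 0 < (Matrix.charpoly Λ).degree := by
      have h1 : (Matrix.charpoly Λ).natDegree = N := by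
        simpa using Matrix.charpoly_natDegree_eq_dim Λ
      rw [Polynomial.natDegree_pos_iff_degree_pos.symm, h1]; omega
    rw [spectrum.map_polynomial_aeval_of_degree_pos Ξ _ hdeg] at h0
    obtain ⟨μ, hμΞ, hμ0⟩ := h0
    have hμΛ : μ ∈ spectrum ℂ Λ := by
      rw [spectrum.mem_iff]
      intro hu
      have hdet : IsUnit (Matrix.scalar (Fin N) μ - Λ).det := by
        rw [← Matrix.isUnit_iff_isUnit_det]
        simpa [Matrix.scalar_apply, Matrix.algebraMap_eq_diagonal, Pi.algebraMap_def] using hu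
      have hμ0' : Polynomial.eval μ (Matrix.charpoly Λ) = 0 := hμ0
      rw [← eval_charpoly_eq_det, hμ0'] at hdet
      exact hdet.ne_zero rfl
    have hmem : μ ∈ spectrum ℂ Ξ ∩ spectrum ℂ Λ := ⟨hμΞ, hμΛ⟩
    rw [hΞΛ] at hmem
    exact hmem
  obtain ⟨u, hu⟩ := hunit
  calc W = ↑u⁻¹ * (↑u * W) := by rw [← mul_assoc, Units.inv_mul, one_mul]
    _ = 0 := by rw [hu, hq, mul_zero]

end Helpers

/-- **Differential recurrence relations for the Cauchy matrix `Ω`.**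
If `ΞΩ − ΩΛ = ηθ` with `Ξ, Λ` sharing no eigenvalue, and
`∂_σ η = Ξ(∂_τ η) + ηA`, `∂_σ θ = (∂_τ θ)Λ − Aθ`, then
`∂_σ Ω = (∂_τ η)θ + (∂_τ Ω)Λ` and `∂_σ Ω = Ξ(∂_τ Ω) − η(∂_τ θ)`. -/
theorem cauchy_matrix_recurrence (N M : ℕ) (hN : 1 ≤ N) (hM : 1 ≤ M)
    (Ξ Λ : Matrix (Fin N) (Fin N) ℂ)
    (hΞΛ : spectrum ℂ Ξ ∩ spectrum ℂ Λ = ∅)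
    (η : ℝ × ℝ → Matrix (Fin N) (Fin M) ℂ)
    (θ : ℝ × ℝ → Matrix (Fin M) (Fin N) ℂ)
    (Ω : ℝ × ℝ → Matrix (Fin N) (Fin N) ℂ)
    (A : ℝ × ℝ → Matrix (Fin M) (Fin M) ℂ)
    (hηd : ∀ i j, Differentiable ℝ fun z => η z i j)
    (hθd : ∀ i j, Differentiable ℝ fun z => θ z i j)
    (hΩd : ∀ i j, Differentiable ℝ fun z => Ω z i j)
    (hAd : ∀ i j, Differentiable ℝ fun z => A z i j)
    (hSyl : ∀ z, Ξ * Ω z - Ω z * Λ = η z * θ z)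
    (hη : ∀ z, pdσ η z = Ξ * pdτ η z + η z * A z)
    (hθ : ∀ z, pdσ θ z = pdτ θ z * Λ - A z * θ z) :
    (∀ z, pdσ Ω z = pdτ η z * θ z + pdτ Ω z * Λ) ∧
    (∀ z, pdσ Ω z = Ξ * pdτ Ω z - η z * pdτ θ z) := by
  have hfun : (fun z => Ξ * Ω z - Ω z * Λ) = fun z => η z * θ z := funext hSyl
  -- differentiability of the pieces
  have hd1 : ∀ i j, Differentiable ℝ fun z => (Ξ * Ω z) i j :=
    entry_diff_mul (fun _ => Ξ) Ω (entry_diff_const Ξ) hΩd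
  have hd2 : ∀ i j, Differentiable ℝ fun z => (Ω z * Λ) i j :=
    entry_diff_mul Ω (fun _ => Λ) hΩd (entry_diff_const Λ)
  -- differentiated Sylvester identity in `τ`
  have Eτ : ∀ z, Ξ * pdτ Ω z - pdτ Ω z * Λ = pdτ η z * θ z + η z * pdτ θ z := by
    intro z
    have h1 : pdτ (fun z => Ξ * Ω z - Ω z * Λ) z
        = pdτ (fun z => Ξ * Ω z) z - pdτ (fun z => Ω z * Λ) z :=
      pdτ_sub _ _ hd1 hd2 z
    have h2 : pdτ (fun z => Ξ * Ω z) z = Ξ * pdτ Ω z := by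
      have := pdτ_mul (fun _ => Ξ) Ω (entry_diff_const Ξ) hΩd z
      simpa [pdτ_const] using this
    have h3 : pdτ (fun z => Ω z * Λ) z = pdτ Ω z * Λ := by
      have := pdτ_mul Ω (fun _ => Λ) hΩd (entry_diff_const Λ) z
      simpa [pdτ_const] using this
    have h4 : pdτ (fun z => η z * θ z) z = pdτ η z * θ z + η z * pdτ θ z :=
      pdτ_mul η θ hηd hθd z
    calc Ξ * pdτ Ω z - pdτ Ω z * Λ
        = pdτ (fun z => Ξ * Ω z - Ω z * Λ) z := by rw [h1, h2, h3]
      _ = pdτ (fun z => η z * θ z) z := by rw [hfun]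
      _ = pdτ η z * θ z + η z * pdτ θ z := h4
  -- differentiated Sylvester identity in `σ`
  have Eσ : ∀ z, Ξ * pdσ Ω z - pdσ Ω z * Λ = pdσ η z * θ z + η z * pdσ θ z := by
    intro z
    have h1 : pdσ (fun z => Ξ * Ω z - Ω z * Λ) z
        = pdσ (fun z => Ξ * Ω z) z - pdσ (fun z => Ω z * Λ) z :=
      pdσ_sub _ _ hd1 hd2 z
    have h2 : pdσ (fun z => Ξ * Ω z) z = Ξ * pdσ Ω z := by
      have := pdσ_mul (fun _ => Ξ) Ω (entry_diff_const Ξ) hΩd z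
      simpa [pdσ_const] using this
    have h3 : pdσ (fun z => Ω z * Λ) z = pdσ Ω z * Λ := by
      have := pdσ_mul Ω (fun _ => Λ) hΩd (entry_diff_const Λ) z
      simpa [pdσ_const] using this
    have h4 : pdσ (fun z => η z * θ z) z = pdσ η z * θ z + η z * pdσ θ z :=
      pdσ_mul η θ hηd hθd z
    calc Ξ * pdσ Ω z - pdσ Ω z * Λ
        = pdσ (fun z => Ξ * Ω z - Ω z * Λ) z := by rw [h1, h2, h3]
      _ = pdσ (fun z => η z * θ z) z := by rw [hfun]
      _ = pdσ η z * θ z + η z * pdσ θ z := h4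
  -- rewrite `Eσ` using `hη`, `hθ` and repackage as solved-for forms
  have eσ : ∀ z, Ξ * pdσ Ω z = pdσ Ω z * Λ
      + (Ξ * (pdτ η z * θ z) + η z * pdτ θ z * Λ) := by
    intro z
    have h := Eσ z
    rw [hη z, hθ z] at h
    have h2 : Ξ * pdσ Ω z = pdσ Ω z * Λ
        + ((Ξ * pdτ η z + η z * A z) * θ z + η z * (pdτ θ z * Λ - A z * θ z)) := by
      rw [← h]; abel
    rw [h2]
    simp only [Matrix.add_mul, Matrix.mul_add, Matrix.sub_mul, Matrix.mul_sub, Matrix.mul_assoc]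
    abel
  have eτ : ∀ z, Ξ * pdτ Ω z = pdτ Ω z * Λ + (pdτ η z * θ z + η z * pdτ θ z) := by
    intro z
    have h := Eτ z
    rw [← h]; abel
  constructor
  · intro z
    have hW : Ξ * (pdσ Ω z - (pdτ η z * θ z + pdτ Ω z * Λ))
        = (pdσ Ω z - (pdτ η z * θ z + pdτ Ω z * Λ)) * Λ := by
      rw [mul_sub, mul_add, eσ z, ← mul_assoc Ξ (pdτ Ω z) Λ, eτ z]
      simp only [Matrix.add_mul, Matrix.mul_add, Matrix.sub_mul, Matrix.mul_sub, Matrix.mul_assoc]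
      abel
    have := sylv_unique hN Ξ Λ hΞΛ _ hW
    rw [sub_eq_zero] at this
    exact this
  · intro z
    have hW : Ξ * (pdσ Ω z - (Ξ * pdτ Ω z - η z * pdτ θ z))
        = (pdσ Ω z - (Ξ * pdτ Ω z - η z * pdτ θ z)) * Λ := by
      rw [mul_sub, eσ z, eτ z]
      simp only [Matrix.add_mul, Matrix.mul_add, Matrix.sub_mul, Matrix.mul_sub, Matrix.mul_assoc]
      rw [← Matrix.mul_assoc Ξ (pdτ Ω z) Λ, eτ z]
      simp only [Matrix.add_mul, Matrix.mul_add, Matrix.sub_mul, Matrix.mul_sub, Matrix.mul_assoc]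
      abel
    have := sylv_unique hN Ξ Λ hΞΛ _ hW
    rw [sub_eq_zero] at this
    exact this

end
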